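/- For any two unit vectors v₁, v₂ ∈ S^{d-1}, if X is uniformly distributed on the unit sphere S^{d-1} ⊆ ℝ^d (d ≥ 2), then P[sign(v₁ · X) ≠ sign(v₂ · X)] = θ(v₁, v₂)/π, where θ(v₁, v₂) = arccos(v₁ · v₂). -/

import Mathlib

open MeasureTheory
open scoped RealInnerProductSpace

/-- The uniform (rotation-invariant) probability distribution on the unit sphere
`S^{d-1} ⊆ ℝ^d`: a probability measure concentrated on the unit sphere that is
invariant under every linear isometry of `ℝ^d`. -/
def IsUniformOnSphere {d : ℕ} (μ : Measure (EuclideanSpace ℝ (Fin d))) : Prop :=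
  IsProbabilityMeasure μ ∧ μ {x | ‖x‖ = 1}ᶜ = 0 ∧
    ∀ f : EuclideanSpace ℝ (Fin d) ≃ₗᵢ[ℝ] EuclideanSpace ℝ (Fin d),
      Measure.map (⇑f) μ = μ

/-- `sign(t) = +1` if `t ≥ 0` and `-1` otherwise. -/
noncomputable def rsign (t : ℝ) : ℝ := if 0 ≤ t then 1 else -1


lemma measurable_coord {d : ℕ} (i : Fin d) : Measurable fun x : EuclideanSpace ℝ (Fin d) => x i :=
  (EuclideanSpace.proj i).continuous.measurable

lemma orth_single {d : ℕ} : Orthonormal ℝ fun i : Fin d => EuclideanSpace.single i (1:ℝ) := by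
  have := (EuclideanSpace.basisFun (Fin d) ℝ).orthonormal
  have h : (fun i : Fin d => EuclideanSpace.single i (1:ℝ)) = ⇑(EuclideanSpace.basisFun (Fin d) ℝ) := by
    funext i; rw [EuclideanSpace.basisFun_apply]
  rw [h]; exact this

lemma meas_preimage {d : ℕ} {μ : Measure (EuclideanSpace ℝ (Fin d))} (hμ : IsUniformOnSphere μ)
    (f : EuclideanSpace ℝ (Fin d) ≃ₗᵢ[ℝ] EuclideanSpace ℝ (Fin d))
    {S : Set (EuclideanSpace ℝ (Fin d))} (hS : MeasurableSet S) : μ (⇑f ⁻¹' S) = μ S := by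
  conv_rhs => rw [← hμ.2.2 f]
  rw [Measure.map_apply f.continuous.measurable hS]

def Ksets (d j : ℕ) : Set (EuclideanSpace ℝ (Fin d)) := {x | ∀ i : Fin d, (i:ℕ) < j → x i = 0}

lemma measurableSet_K {d j : ℕ} : MeasurableSet (Ksets d j) := by
  have : Ksets d j = ⋂ (i : Fin d) (_ : (i:ℕ) < j), {x : EuclideanSpace ℝ (Fin d) | x i = 0} := by
    ext x; simp [Ksets]
  rw [this]
  exact MeasurableSet.iInter fun i => MeasurableSet.iInter fun _ =>
    measurable_coord i (measurableSet_singleton 0)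
lemma exists_iso {d m : ℕ} (hmd : m ≤ d) (u w : Fin m → EuclideanSpace ℝ (Fin d))
    (hu : Orthonormal ℝ u) (hw : Orthonormal ℝ w) :
    ∃ f : EuclideanSpace ℝ (Fin d) ≃ₗᵢ[ℝ] EuclideanSpace ℝ (Fin d), ∀ i, f (u i) = w i := by
  have hcard : Module.finrank ℝ (EuclideanSpace ℝ (Fin d)) = Fintype.card (Fin d) := by simp
  set s : Set (Fin d) := {i | (i : ℕ) < m} with hs
  have hext : ∀ v : Fin m → EuclideanSpace ℝ (Fin d), Orthonormal ℝ v →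
      ∃ b : OrthonormalBasis (Fin d) ℝ (EuclideanSpace ℝ (Fin d)),
        ∀ i : Fin m, b (Fin.castLE hmd i) = v i := by
    intro v hv
    set v' : Fin d → EuclideanSpace ℝ (Fin d) :=
      fun i => if h : (i : ℕ) < m then v ⟨i, h⟩ else 0 with hv'
    have hres : Orthonormal ℝ (s.restrict v') := by
      have : s.restrict v' = v ∘ (fun i : s => (⟨i.1, i.2⟩ : Fin m)) := by
        funext i; exact dif_pos i.2
      rw [this]
      exact hv.comp _ fun a b hab =>
        Subtype.ext (Fin.ext (by simpa using congrArg Fin.val hab))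
    obtain ⟨b, hb⟩ := hres.exists_orthonormalBasis_extension_of_card_eq hcard
    refine ⟨b, fun i => ?_⟩
    have h1 : (Fin.castLE hmd i : Fin d) ∈ s := by simp [hs]
    rw [hb _ h1]
    simp [hv']
  obtain ⟨bu, hbu⟩ := hext u hu
  obtain ⟨bw, hbw⟩ := hext w hw
  refine ⟨bu.repr.trans bw.repr.symm, fun i => ?_⟩
  have : bu.repr (u i) = EuclideanSpace.single (Fin.castLE hmd i) 1 := by
    rw [← hbu i, bu.repr_self]
  simp [this, ← hbw i, OrthonormalBasis.repr_symm_single]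

lemma const_eq_of_null_inter {α : Type*} [MeasurableSpace α] {μ : Measure α}
    [IsProbabilityMeasure μ] {A : ℕ → Set α} (hA : ∀ k, MeasurableSet (A k))
    {B : Set α} (hB : MeasurableSet B) (hBA : ∀ k, B ⊆ A k)
    (hI : ∀ k l, k ≠ l → A k ∩ A l ⊆ B) {c : ENNReal} (hc : ∀ k, μ (A k) = c) :
    c = μ B := by
  have hBc : μ B ≤ c := (hc 0) ▸ measure_mono (hBA 0)
  have hcne : c ≠ ⊤ := by rw [← hc 0]; exact (measure_ne_top μ _)
  have hdiff : ∀ k, μ (A k \ B) = c - μ B := by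
    intro k
    rw [measure_diff (hBA k) hB.nullMeasurableSet (measure_ne_top μ _), hc k]
  have hdisj : Pairwise (Function.onFun Disjoint (fun k => A k \ B)) := by
    intro k l hkl
    refine Set.disjoint_left.mpr fun x hx hx' => ?_
    exact hx.2 (hI k l hkl ⟨hx.1, hx'.1⟩)
  have hsum : ∑' k : ℕ, μ (A k \ B) = μ (⋃ k, A k \ B) :=
    (measure_iUnion hdisj fun k => (hA k).diff hB).symm
  have hle : ∑' _ : ℕ, (c - μ B) ≤ 1 := by
    rw [tsum_congr fun k => (hdiff k).symm, hsum]
    exact prob_le_one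
  have hz : c - μ B = 0 := by
    by_contra h
    rw [ENNReal.tsum_const_eq_top_of_ne_zero h] at hle
    exact (by simp : ¬ (⊤ : ENNReal) ≤ 1) hle
  exact le_antisymm (tsub_eq_zero_iff_le.mp hz) hBc

lemma K_step {d : ℕ} {μ : Measure (EuclideanSpace ℝ (Fin d))} (hμ : IsUniformOnSphere μ)
    {j : ℕ} (hj : j + 1 < d) : μ (Ksets d (j+1)) = μ (Ksets d (j+2)) := by
  haveI := hμ.1
  have hjd : j < d := Nat.lt_of_succ_lt hj
  set a : Fin d := ⟨j, hjd⟩ with ha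
  set b : Fin d := ⟨j+1, hj⟩ with hb
  have hab : a ≠ b := by simp [ha, hb, Fin.ext_iff]
  set sk : ℕ → ℝ := fun k => Real.sqrt (1 + (k:ℝ)^2) with hsk
  have hskpos : ∀ k, 0 < sk k := fun k => Real.sqrt_pos.mpr (by positivity)
  set wv : ℕ → EuclideanSpace ℝ (Fin d) := fun k =>
    (sk k)⁻¹ • (EuclideanSpace.single a 1 + (k:ℝ) • EuclideanSpace.single b 1) with hwv
  have hinner_wv : ∀ (k : ℕ) (x : EuclideanSpace ℝ (Fin d)),
      ⟪wv k, x⟫ = (sk k)⁻¹ * (x a + k * x b) := by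
    intro k x
    simp [hwv, inner_add_left, real_inner_smul_left, EuclideanSpace.inner_single_left]
    ring
  set A : ℕ → Set (EuclideanSpace ℝ (Fin d)) := fun k =>
    {x | (∀ i : Fin d, (i:ℕ) < j → x i = 0) ∧ x a + k * x b = 0} with hA
  have hAmeas : ∀ k, MeasurableSet (A k) := by
    intro k
    have : A k = Ksets d j ∩ {x : EuclideanSpace ℝ (Fin d) | x a + k * x b = 0} := rfl
    rw [this]
    exact measurableSet_K.inter
      (((measurable_coord a).add ((measurable_coord b).const_mul _)) (measurableSet_singleton 0))
  have hjd1 : j + 1 ≤ d := hj.le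
  set emb : Fin (j+1) → Fin d := Fin.castLE hjd1 with hemb
  set tgt : Fin (j+1) → EuclideanSpace ℝ (Fin d) := fun i => EuclideanSpace.single (emb i) 1
    with htgt
  have htgt_on : Orthonormal ℝ tgt := orth_single.comp emb (Fin.castLE_injective _)
  set src : ℕ → Fin (j+1) → EuclideanSpace ℝ (Fin d) := fun k i =>
    if (i : ℕ) < j then EuclideanSpace.single (emb i) 1 else wv k with hsrc
  have hsingle_inner : ∀ p q : Fin d,
      ⟪EuclideanSpace.single p (1:ℝ), EuclideanSpace.single q (1:ℝ)⟫ = if p = q then 1 else 0 := by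
    intro p q
    simp [EuclideanSpace.inner_single_left, EuclideanSpace.single_apply, eq_comm]
  have hsingle_wv : ∀ (k : ℕ) (p : Fin d), p ≠ a → p ≠ b →
      ⟪EuclideanSpace.single p (1:ℝ), wv k⟫ = 0 := by
    intro k p hpa hpb
    simp only [hwv, inner_add_right, real_inner_smul_right, hsingle_inner]
    simp [hpa, hpb]
  have hwv_self : ∀ k : ℕ, ⟪wv k, wv k⟫ = (1:ℝ) := by
    intro k
    have h1 : ⟪wv k, wv k⟫ = (sk k)⁻¹ * (sk k)⁻¹ * (1 + (k:ℝ)^2) := by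
      simp only [hwv, inner_add_left, inner_add_right, real_inner_smul_left,
        real_inner_smul_right, hsingle_inner]
      simp [hab, hab.symm]
      ring
    rw [h1]
    have hs2 : sk k * sk k = 1 + (k:ℝ)^2 := Real.mul_self_sqrt (by positivity)
    have hne := (hskpos k).ne'
    rw [← hs2, ← mul_inv, inv_mul_cancel₀ (mul_ne_zero hne hne)]
  have hsrc_on : ∀ k, Orthonormal ℝ (src k) := by
    intro k
    rw [orthonormal_iff_ite]
    intro i i'
    by_cases h1 : (i : ℕ) < j <;> by_cases h2 : (i' : ℕ) < j
    · rw [hsrc]; simp only [if_pos h1, if_pos h2]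
      rw [hsingle_inner]
      have hiff : emb i = emb i' ↔ i = i' := (Fin.castLE_injective hjd1).eq_iff
      by_cases h : i = i' <;> simp [h, hiff]
    · rw [hsrc]; simp only [if_pos h1, if_neg h2]
      have hine : i ≠ i' := fun h => h2 (h ▸ h1)
      rw [hsingle_wv k _ (by simp [ha, hemb, Fin.ext_iff]; omega)
        (by simp [hb, hemb, Fin.ext_iff]; omega)]
      simp [hine]
    · rw [hsrc]; simp only [if_neg h1, if_pos h2]
      have hine : i ≠ i' := fun h => h1 (h ▸ h2)
      rw [real_inner_comm, hsingle_wv k _ (by simp [ha, hemb, Fin.ext_iff]; omega)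
        (by simp [hb, hemb, Fin.ext_iff]; omega)]
      simp [hine]
    · have hii' : i = i' := by
        have := i.2; have := i'.2
        apply Fin.ext; omega
      rw [hsrc]; simp only [if_neg h1, if_neg h2]
      rw [hwv_self]
      simp [hii']
  have hμA : ∀ k : ℕ, μ (A k) = μ (Ksets d (j+1)) := by
    intro k
    obtain ⟨f, hf⟩ := exists_iso hjd1 (src k) tgt (hsrc_on k) htgt_on
    have key : ∀ (i' : Fin (j+1)) (x : EuclideanSpace ℝ (Fin d)),
        ⟪src k i', x⟫ = (f x) (emb i') := by
      intro i' x
      calc ⟪src k i', x⟫ = ⟪f (src k i'), f x⟫ := (f.inner_map_map _ _).symm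
        _ = ⟪tgt i', f x⟫ := by rw [hf]
        _ = (f x) (emb i') := by
            rw [htgt]; simp [EuclideanSpace.inner_single_left]
    have hpre : A k = ⇑f ⁻¹' Ksets d (j+1) := by
      ext x
      simp only [Set.mem_preimage, Ksets, Set.mem_setOf_eq, hA]
      constructor
      · rintro ⟨hx1, hx2⟩ i hi
        have hieq : i = emb ⟨(i:ℕ), hi⟩ := by simp [hemb, Fin.ext_iff]
        rw [hieq, ← key]
        rcases Nat.lt_or_ge (i : ℕ) j with hlt | hge
        · rw [hsrc]; simp only [if_pos hlt]
          rw [EuclideanSpace.inner_single_left]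
          simp only [map_one, one_mul]
          exact hx1 _ (by simpa [hemb] using hlt)
        · rw [hsrc]
          have : ¬ ((⟨(i:ℕ), hi⟩ : Fin (j+1)) : ℕ) < j := by simpa using hge
          simp only [if_neg this]
          rw [hinner_wv, hx2, mul_zero]
      · intro h
        have hx' : ∀ i' : Fin (j+1), ⟪src k i', x⟫ = 0 := by
          intro i'
          rw [key]
          exact h _ (by have := i'.2; simp [hemb]; omega)
        constructor
        · intro i hi
          have hi1 : (i : ℕ) < j + 1 := Nat.lt_succ_of_lt hi
          have := hx' ⟨(i:ℕ), hi1⟩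
          rw [hsrc] at this
          simp only [if_pos (show ((⟨(i:ℕ), hi1⟩ : Fin (j+1)) : ℕ) < j from hi)] at this
          rw [EuclideanSpace.inner_single_left] at this
          simp only [map_one, one_mul] at this
          have hieq : emb ⟨(i:ℕ), hi1⟩ = i := by simp [hemb, Fin.ext_iff]
          rwa [hieq] at this
        · have := hx' ⟨j, Nat.lt_succ_self j⟩
          rw [hsrc] at this
          simp only [if_neg (show ¬ ((⟨j, Nat.lt_succ_self j⟩ : Fin (j+1)) : ℕ) < j by simp)] at this
          rw [hinner_wv] at this
          rcases mul_eq_zero.mp this with h0 | h0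
          · exact absurd h0 (by positivity)
          · exact h0
    rw [hpre]
    exact meas_preimage hμ f measurableSet_K
  have hBA : ∀ k : ℕ, Ksets d (j+2) ⊆ A k := by
    intro k x hx
    refine ⟨fun i hi => hx i (by omega), ?_⟩
    rw [hx a (by simp [ha]), hx b (by simp [hb])]
    ring
  have hI : ∀ k l : ℕ, k ≠ l → A k ∩ A l ⊆ Ksets d (j+2) := by
    intro k l hkl x hx
    obtain ⟨⟨h1, h2⟩, ⟨_, h3⟩⟩ := hx
    have hxb : x b = 0 := by
      have hkl' : (k:ℝ) ≠ l := Nat.cast_injective.ne hkl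
      have : ((k:ℝ) - l) * x b = 0 := by linarith
      rcases mul_eq_zero.mp this with h | h
      · exact absurd (by linarith : (k:ℝ) = l) hkl'
      · exact h
    have hxa : x a = 0 := by
      have := h2; rw [hxb] at this; linarith
    intro i hi
    rcases Nat.lt_or_ge (i:ℕ) j with h | h
    · exact h1 i h
    · rcases Nat.lt_or_ge (i:ℕ) (j+1) with h' | h'
      · have : i = a := by apply Fin.ext; simp [ha]; omega
        rw [this]; exact hxa
      · have : i = b := by apply Fin.ext; simp [hb]; omega
        rw [this]; exact hxb
  exact const_eq_of_null_inter hAmeas measurableSet_K hBA hI hμA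

lemma ortho_singleton {d : ℕ} (v : EuclideanSpace ℝ (Fin d)) (hv : ‖v‖ = 1) :
    Orthonormal ℝ (fun _ : Fin 1 => v) := by
  rw [orthonormal_iff_ite]
  intro i j
  have hij : i = j := Subsingleton.elim i j
  subst hij
  rw [if_pos rfl, real_inner_self_eq_norm_mul_norm, hv, one_mul]

lemma hyperplane_null {d : ℕ} {μ : Measure (EuclideanSpace ℝ (Fin d))} (hμ : IsUniformOnSphere μ)
    (hd : 2 ≤ d) (v : EuclideanSpace ℝ (Fin d)) (hv : ‖v‖ = 1) :
    μ {x | ⟪v, x⟫ = 0} = 0 := by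
  have hKtop : μ (Ksets d d) = 0 := by
    have hsub : Ksets d d ⊆ {x : EuclideanSpace ℝ (Fin d) | ‖x‖ = 1}ᶜ := by
      intro x hx
      have hx0 : x = 0 := by
        ext i
        simpa using hx i i.2
      simp [hx0]
    exact le_antisymm (le_trans (measure_mono hsub) (le_of_eq hμ.2.1)) zero_le
  have step : ∀ t, 1 ≤ t → t < d → μ (Ksets d t) = μ (Ksets d (t+1)) := by
    intro t h1 h2
    obtain ⟨j, rfl⟩ : ∃ j, t = j + 1 := ⟨t - 1, by omega⟩
    exact K_step hμ (by omega)
  have chain : ∀ t, 1 ≤ t → t ≤ d → μ (Ksets d 1) = μ (Ksets d t) := by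
    intro t
    induction t with
    | zero => intro h1 _; omega
    | succ n ih =>
      intro _ h2
      rcases Nat.eq_zero_or_pos n with h | h
      · subst h; rfl
      · rw [← step n h (by omega)]
        exact ih h (by omega)
  have hK1 : μ (Ksets d 1) = 0 := by
    rw [chain d (by omega) le_rfl]; exact hKtop
  set e0 : EuclideanSpace ℝ (Fin d) := EuclideanSpace.single ⟨0, by omega⟩ 1 with he0
  have he0n : ‖e0‖ = 1 := by simp [he0, EuclideanSpace.norm_single]
  obtain ⟨f, hf⟩ := exists_iso (show 1 ≤ d by omega) (fun _ : Fin 1 => e0) (fun _ => v)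
    (ortho_singleton _ he0n) (ortho_singleton _ hv)
  have hfe : f e0 = v := hf 0
  have hScont : Continuous fun x : EuclideanSpace ℝ (Fin d) => ⟪v, x⟫ :=
    continuous_const.inner continuous_id
  have hSmeas : MeasurableSet {x : EuclideanSpace ℝ (Fin d) | ⟪v, x⟫ = 0} :=
    hScont.measurable (measurableSet_singleton 0)
  have hpre : ⇑f ⁻¹' {x | ⟪v, x⟫ = 0} = Ksets d 1 := by
    ext x
    simp only [Set.mem_preimage, Set.mem_setOf_eq, Ksets]
    rw [← hfe, f.inner_map_map]
    constructor
    · intro h i hi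
      have : i = (⟨0, by omega⟩ : Fin d) := by apply Fin.ext; simp; omega
      rw [this]
      rw [he0, EuclideanSpace.inner_single_left] at h
      simpa using h
    · intro h
      rw [he0, EuclideanSpace.inner_single_left]
      simpa using h _ (by norm_num)
  rw [← meas_preimage hμ f hSmeas, hpre, hK1]


lemma rsign_ne_iff' (a b : ℝ) : rsign a ≠ rsign b ↔ (0 ≤ a ∧ b < 0) ∨ (0 ≤ b ∧ a < 0) := by
  unfold rsign
  by_cases h1 : 0 ≤ a <;> by_cases h2 : 0 ≤ b
  · simp [h1, h2, not_lt.mpr h1, not_lt.mpr h2]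
  · simp [h1, h2, not_le.mp h2]
    norm_num
  · simp [h1, h2, not_le.mp h1]
    norm_num
  · simp [h1, h2, not_lt.mpr (le_of_lt (not_le.mp h1)), not_lt.mpr (le_of_lt (not_le.mp h2))]

lemma rsign_ne_iff {s t : ℝ} (hs : s ≠ 0) (ht : t ≠ 0) : rsign s ≠ rsign t ↔ s * t < 0 := by
  rw [rsign_ne_iff']
  constructor
  · rintro (⟨h1, h2⟩ | ⟨h1, h2⟩)
    · have : 0 < s := lt_of_le_of_ne h1 (Ne.symm hs)
      nlinarith
    · have : 0 < t := lt_of_le_of_ne h1 (Ne.symm ht)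
      nlinarith
  · intro h
    rcases hs.lt_or_gt with h1 | h1 <;> rcases ht.lt_or_gt with h2 | h2
    · nlinarith
    · right; exact ⟨h2.le, h1⟩
    · left; exact ⟨h1.le, h2⟩
    · nlinarith

lemma rsign_neg_ne_iff (t : ℝ) : rsign t ≠ rsign (-t) ↔ t ≠ 0 := by
  constructor
  · intro h ht
    rw [ht] at h
    simp at h
  · intro ht
    rw [rsign_ne_iff ht (neg_ne_zero.mpr ht)]
    rcases ht.lt_or_gt with h | h <;> nlinarith

lemma eq_of_sq_eq {a b : ℝ} (ha : 0 ≤ a) (hb : 0 < b) (h : a^2 = b^2) : a = b := by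
  have h2 : (a - b) * (a + b) = 0 := by linear_combination h
  rcases mul_eq_zero.mp h2 with h3 | h3 <;> linarith

def Dset {d : ℕ} (v₁ v₂ : EuclideanSpace ℝ (Fin d)) : Set (EuclideanSpace ℝ (Fin d)) :=
  {x | rsign ⟪v₁, x⟫ ≠ rsign ⟪v₂, x⟫}

lemma measurableSet_Dset {d : ℕ} (v₁ v₂ : EuclideanSpace ℝ (Fin d)) :
    MeasurableSet (Dset v₁ v₂) := by
  have hm : ∀ v : EuclideanSpace ℝ (Fin d),
      Measurable fun x : EuclideanSpace ℝ (Fin d) => ⟪v, x⟫ := fun v =>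
    (continuous_const.inner continuous_id).measurable
  have h1 : ∀ v : EuclideanSpace ℝ (Fin d),
      MeasurableSet {x : EuclideanSpace ℝ (Fin d) | 0 ≤ ⟪v, x⟫} := fun v =>
    measurableSet_le measurable_const (hm v)
  have h2 : ∀ v : EuclideanSpace ℝ (Fin d),
      MeasurableSet {x : EuclideanSpace ℝ (Fin d) | ⟪v, x⟫ < 0} := fun v =>
    measurableSet_lt (hm v) measurable_const
  have hD : Dset v₁ v₂ = ({x | 0 ≤ ⟪v₁, x⟫} ∩ {x | ⟪v₂, x⟫ < 0}) ∪
      ({x | 0 ≤ ⟪v₂, x⟫} ∩ {x | ⟪v₁, x⟫ < 0}) := by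
    ext x
    simp only [Dset, Set.mem_setOf_eq, Set.mem_union, Set.mem_inter_iff]
    exact rsign_ne_iff' _ _
  rw [hD]
  exact ((h1 v₁).inter (h2 v₂)).union ((h1 v₂).inter (h2 v₁))

lemma Dset_preimage {d : ℕ} (f : EuclideanSpace ℝ (Fin d) ≃ₗᵢ[ℝ] EuclideanSpace ℝ (Fin d))
    (v₁ v₂ : EuclideanSpace ℝ (Fin d)) : Dset v₁ v₂ = ⇑f ⁻¹' Dset (f v₁) (f v₂) := by
  ext x
  simp only [Dset, Set.mem_preimage, Set.mem_setOf_eq, f.inner_map_map]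

lemma meas_Dset_neg {d : ℕ} {μ : Measure (EuclideanSpace ℝ (Fin d))} (hμ : IsUniformOnSphere μ)
    (hd : 2 ≤ d) (p : EuclideanSpace ℝ (Fin d)) (hp : ‖p‖ = 1) : μ (Dset p (-p)) = 1 := by
  haveI := hμ.1
  have eD : Dset p (-p) = {x : EuclideanSpace ℝ (Fin d) | ⟪p, x⟫ = 0}ᶜ := by
    ext x
    simp only [Dset, Set.mem_setOf_eq, Set.mem_compl_iff, inner_neg_left]
    exact rsign_neg_ne_iff _
  have hmeas0 : MeasurableSet {x : EuclideanSpace ℝ (Fin d) | ⟪p, x⟫ = 0} :=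
    (continuous_const.inner continuous_id).measurable (measurableSet_singleton (0:ℝ))
  rw [eD, prob_compl_eq_one_sub hmeas0, hyperplane_null hμ hd p hp]
  simp

lemma meas_Dset_eq {d : ℕ} {μ : Measure (EuclideanSpace ℝ (Fin d))} (hμ : IsUniformOnSphere μ)
    (hd : 2 ≤ d) {u₁ u₂ v₁ v₂ : EuclideanSpace ℝ (Fin d)}
    (hu₁ : ‖u₁‖ = 1) (hu₂ : ‖u₂‖ = 1) (hv₁ : ‖v₁‖ = 1) (hv₂ : ‖v₂‖ = 1)
    (h : ⟪u₁, u₂⟫ = ⟪v₁, v₂⟫) : μ (Dset u₁ u₂) = μ (Dset v₁ v₂) := by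
  set c : ℝ := ⟪u₁, u₂⟫ with hc
  have hc1 : |c| ≤ 1 := by
    have := abs_real_inner_le_norm u₁ u₂
    rwa [hu₁, hu₂, one_mul] at this
  rcases lt_or_eq_of_le hc1 with hlt | heq
  · -- generic case
    set s : ℝ := Real.sqrt (1 - c^2) with hs
    have hc2 : 0 < 1 - c^2 := by
      have := abs_lt.mp hlt
      nlinarith [this.1, this.2]
    have hspos : 0 < s := Real.sqrt_pos.mpr hc2
    have hss : s * s = 1 - c^2 := Real.mul_self_sqrt hc2.le
    have hs2 : s^2 = 1 - c^2 := by rw [sq]; exact hss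
    have mk : ∀ p q : EuclideanSpace ℝ (Fin d), ‖p‖ = 1 → ‖q‖ = 1 → ⟪p, q⟫ = c →
        ∃ w, ⟪p, w⟫ = 0 ∧ ‖w‖ = 1 ∧ q = c • p + s • w := by
      intro p q hp hq hpq
      refine ⟨s⁻¹ • (q - c • p), ?_, ?_, ?_⟩
      · rw [real_inner_smul_right, inner_sub_right, real_inner_smul_right, hpq,
          real_inner_self_eq_norm_mul_norm, hp]
        ring
      · have e1 : ⟪q, c • p⟫ = c * c := by
          rw [real_inner_smul_right, real_inner_comm, hpq]
        have e2 : ‖c • p‖ = |c| := by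
          rw [norm_smul, Real.norm_eq_abs, hp, mul_one]
        have hn : ‖q - c • p‖^2 = s^2 := by
          rw [norm_sub_sq_real, e1, e2, hq, sq_abs, hs2]
          ring
        have hqp : ‖q - c • p‖ = s := eq_of_sq_eq (norm_nonneg _) hspos hn
        rw [norm_smul, Real.norm_eq_abs, abs_of_pos (inv_pos.mpr hspos), hqp,
          inv_mul_cancel₀ hspos.ne']
      · rw [smul_smul, mul_inv_cancel₀ hspos.ne', one_smul]
        abel
    obtain ⟨w₁, hw₁o, hw₁n, hw₁e⟩ := mk u₁ u₂ hu₁ hu₂ rfl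
    obtain ⟨w₂, hw₂o, hw₂n, hw₂e⟩ := mk v₁ v₂ hv₁ hv₂ h.symm
    have hpair : ∀ (p w : EuclideanSpace ℝ (Fin d)), ‖p‖ = 1 → ‖w‖ = 1 → ⟪p, w⟫ = 0 →
        Orthonormal ℝ ![p, w] := by
      intro p w hp hw hpw
      rw [orthonormal_iff_ite]
      intro i j
      fin_cases i <;> fin_cases j <;>
        simp only [Matrix.cons_val_zero, Matrix.cons_val_one, Matrix.head_cons, Fin.zero_eta,
          Fin.mk_one]
      · simp only [if_true]
        rw [real_inner_self_eq_norm_mul_norm, hp, one_mul]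
      · rw [if_neg (by decide)]
        exact hpw
      · rw [if_neg (by decide), real_inner_comm]
        exact hpw
      · simp only [if_true]
        rw [real_inner_self_eq_norm_mul_norm, hw, one_mul]
    obtain ⟨f, hf⟩ := exists_iso hd ![u₁, w₁] ![v₁, w₂]
      (hpair _ _ hu₁ hw₁n hw₁o) (hpair _ _ hv₁ hw₂n hw₂o)
    have hf0 : f u₁ = v₁ := by simpa using hf 0
    have hf1 : f w₁ = w₂ := by simpa using hf 1
    have hf2 : f u₂ = v₂ := by
      rw [hw₁e, map_add, f.map_smul, f.map_smul, hf0, hf1, ← hw₂e]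
    rw [Dset_preimage f u₁ u₂, hf0, hf2]
    exact meas_preimage hμ f (measurableSet_Dset _ _)
  · -- degenerate: |c| = 1
    rcases (abs_eq (by norm_num : (0:ℝ) ≤ 1)).mp heq with h1 | h1
    · have hu : u₁ = u₂ := (inner_eq_one_iff_of_norm_eq_one hu₁ hu₂).mp (by rw [← hc]; exact h1)
      have hv : v₁ = v₂ := (inner_eq_one_iff_of_norm_eq_one hv₁ hv₂).mp (by rw [← h]; exact h1)
      have e1 : Dset u₁ u₂ = ∅ := by
        ext x; simp [Dset, hu]
      have e2 : Dset v₁ v₂ = ∅ := by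
        ext x; simp [Dset, hv]
      rw [e1, e2]
    · have hu : u₂ = -u₁ := by
        have h2 : ⟪u₁, -u₂⟫ = 1 := by rw [inner_neg_right, ← hc, h1]; norm_num
        have h3 : u₁ = -u₂ := (inner_eq_one_iff_of_norm_eq_one hu₁
          (by rw [norm_neg]; exact hu₂)).mp h2
        rw [h3, neg_neg]
      have hv : v₂ = -v₁ := by
        have h2 : ⟪v₁, -v₂⟫ = 1 := by rw [inner_neg_right, ← h, h1]; norm_num
        have h3 : v₁ = -v₂ := (inner_eq_one_iff_of_norm_eq_one hv₁
          (by rw [norm_neg]; exact hv₂)).mp h2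
        rw [h3, neg_neg]
      rw [hu, hv, meas_Dset_neg hμ hd u₁ hu₁, meas_Dset_neg hμ hd v₁ hv₁]

lemma inner_ss {d : ℕ} (p q : Fin d) :
    ⟪EuclideanSpace.single p (1:ℝ), EuclideanSpace.single q (1:ℝ)⟫ = if p = q then 1 else 0 := by
  simp [EuclideanSpace.inner_single_left, EuclideanSpace.single_apply, eq_comm]

noncomputable def uvec (d : ℕ) (hd : 2 ≤ d) (θ : ℝ) : EuclideanSpace ℝ (Fin d) :=
  Real.cos θ • EuclideanSpace.single ⟨0, by omega⟩ 1 +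
    Real.sin θ • EuclideanSpace.single ⟨1, by omega⟩ 1

lemma inner_uvec {d : ℕ} (hd : 2 ≤ d) (s t : ℝ) :
    ⟪uvec d hd s, uvec d hd t⟫ = Real.cos (t - s) := by
  unfold uvec
  rw [Real.cos_sub]
  simp only [inner_add_left, inner_add_right, real_inner_smul_left, real_inner_smul_right,
    inner_ss]
  have h01 : (⟨0, by omega⟩ : Fin d) ≠ ⟨1, by omega⟩ := by simp [Fin.ext_iff]
  simp [h01, h01.symm]

lemma norm_uvec {d : ℕ} (hd : 2 ≤ d) (θ : ℝ) : ‖uvec d hd θ‖ = 1 := by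
  have h := inner_uvec hd θ θ
  rw [sub_self, Real.cos_zero, real_inner_self_eq_norm_mul_norm] at h
  rcases mul_self_eq_one_iff.mp h with h' | h'
  · exact h'
  · exfalso; have := norm_nonneg (uvec d hd θ); linarith

lemma uvec_pi {d : ℕ} (hd : 2 ≤ d) : uvec d hd Real.pi = -(uvec d hd 0) := by
  unfold uvec
  rw [Real.cos_pi, Real.sin_pi, Real.cos_zero, Real.sin_zero]
  simp

lemma uvec_identity {d : ℕ} (hd : 2 ≤ d) (a b : ℝ) (x : EuclideanSpace ℝ (Fin d)) :
    Real.sin (b - a) * ⟪uvec d hd 0, x⟫ + Real.sin a * ⟪uvec d hd b, x⟫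
      = Real.sin b * ⟪uvec d hd a, x⟫ := by
  unfold uvec
  simp only [inner_add_left, real_inner_smul_left]
  rw [Real.sin_sub, Real.cos_zero, Real.sin_zero]
  ring

lemma G_additive {d : ℕ} {μ : Measure (EuclideanSpace ℝ (Fin d))} (hμ : IsUniformOnSphere μ)
    (hd : 2 ≤ d) {a b : ℝ} (h0 : 0 ≤ a) (hab : a ≤ b) (hbπ : b ≤ Real.pi) :
    μ (Dset (uvec d hd 0) (uvec d hd b)) =
      μ (Dset (uvec d hd 0) (uvec d hd a)) + μ (Dset (uvec d hd 0) (uvec d hd (b - a))) := by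
  haveI := hμ.1
  have hπ := Real.pi_pos
  -- rotation invariance
  have hrot : μ (Dset (uvec d hd a) (uvec d hd b)) = μ (Dset (uvec d hd 0) (uvec d hd (b - a))) := by
    apply meas_Dset_eq hμ hd (norm_uvec hd a) (norm_uvec hd b) (norm_uvec hd 0) (norm_uvec hd (b-a))
    rw [inner_uvec, inner_uvec]
    norm_num
  rw [← hrot]
  -- null set
  set N : Set (EuclideanSpace ℝ (Fin d)) :=
    {x | ⟪uvec d hd 0, x⟫ = 0} ∪ ({x | ⟪uvec d hd a, x⟫ = 0} ∪ {x | ⟪uvec d hd b, x⟫ = 0}) with hN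
  have hmeas0 : ∀ θ : ℝ, MeasurableSet {x : EuclideanSpace ℝ (Fin d) | ⟪uvec d hd θ, x⟫ = 0} :=
    fun θ => (continuous_const.inner continuous_id).measurable (measurableSet_singleton (0:ℝ))
  have hNmeas : MeasurableSet N := ((hmeas0 0).union ((hmeas0 a).union (hmeas0 b)))
  have hNnull : μ N = 0 := by
    rw [hN]
    refine measure_union_null (hyperplane_null hμ hd _ (norm_uvec hd 0)) ?_
    exact measure_union_null (hyperplane_null hμ hd _ (norm_uvec hd a))
      (hyperplane_null hμ hd _ (norm_uvec hd b))
  -- key pointwise fact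
  have key : ∀ x ∉ N, ¬(rsign ⟪uvec d hd 0, x⟫ ≠ rsign ⟪uvec d hd a, x⟫ ∧
      rsign ⟪uvec d hd a, x⟫ ≠ rsign ⟪uvec d hd b, x⟫) := by
    intro x hxN
    simp only [hN, Set.mem_union, Set.mem_setOf_eq, not_or] at hxN
    obtain ⟨hp, hq, hr⟩ := hxN
    rintro ⟨h1, h2⟩
    rw [rsign_ne_iff hp hq] at h1
    rw [rsign_ne_iff hq hr] at h2
    have hsa : 0 ≤ Real.sin a := Real.sin_nonneg_of_nonneg_of_le_pi h0 (hab.trans hbπ)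
    have hsb : 0 ≤ Real.sin b := Real.sin_nonneg_of_nonneg_of_le_pi (h0.trans hab) hbπ
    have hsba : 0 ≤ Real.sin (b - a) :=
      Real.sin_nonneg_of_nonneg_of_le_pi (by linarith) (by linarith)
    have hid := uvec_identity hd a b x
    set p := ⟪uvec d hd 0, x⟫ with hpdef
    set q := ⟪uvec d hd a, x⟫ with hqdef
    set r := ⟪uvec d hd b, x⟫ with hrdef
    have e : Real.sin (b - a) * (p * q) + Real.sin a * (r * q) = Real.sin b * (q * q) := by
      linear_combination q * hid
    have t1 : Real.sin (b - a) * (p * q) ≤ 0 := mul_nonpos_iff.mpr (Or.inl ⟨hsba, h1.le⟩)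
    have hrq : r * q < 0 := by rw [mul_comm]; exact h2
    have t2 : Real.sin a * (r * q) ≤ 0 := mul_nonpos_iff.mpr (Or.inl ⟨hsa, hrq.le⟩)
    have t3 : 0 ≤ Real.sin b * (q * q) := mul_nonneg hsb (mul_self_nonneg q)
    have hY0 : Real.sin a * (r * q) = 0 := by linarith
    rcases mul_eq_zero.mp hY0 with hsin0 | hrq0
    · have haπ : a = 0 ∨ a = Real.pi := by
        by_cases hA : a = Real.pi
        · right; exact hA
        · left
          have haπ' : a < Real.pi := lt_of_le_of_ne (hab.trans hbπ) hA
          exact (Real.sin_eq_zero_iff_of_lt_of_lt (by linarith) haπ').mp hsin0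
      rcases haπ with h' | h'
      · have hqp : q = p := by rw [hqdef, hpdef, h']
        rw [hqp] at h1
        exact absurd h1 (not_lt.mpr (mul_self_nonneg p))
      · have hb' : b = Real.pi := le_antisymm hbπ (h' ▸ hab)
        have hqr : q = r := by rw [hqdef, hrdef, h', hb']
        rw [hqr] at h2
        exact absurd h2 (not_lt.mpr (mul_self_nonneg r))
    · exact absurd hrq0 hrq.ne
  -- set identities
  set D0a := Dset (uvec d hd 0) (uvec d hd a)
  set Dab := Dset (uvec d hd a) (uvec d hd b)
  set D0b := Dset (uvec d hd 0) (uvec d hd b)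
  have hsplit : D0b \ N = (D0a \ N) ∪ (Dab \ N) := by
    ext x
    simp only [Set.mem_diff, Set.mem_union, Dset, Set.mem_setOf_eq, D0a, Dab, D0b]
    constructor
    · rintro ⟨hx, hxN⟩
      by_cases h1 : rsign ⟪uvec d hd 0, x⟫ = rsign ⟪uvec d hd a, x⟫
      · exact Or.inr ⟨fun he => hx (h1.trans he), hxN⟩
      · exact Or.inl ⟨h1, hxN⟩
    · rintro (⟨hx, hxN⟩ | ⟨hx, hxN⟩) <;> refine ⟨?_, hxN⟩
      · intro he
        refine key x hxN ⟨hx, fun he2 => hx ?_⟩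
        exact he.trans he2.symm
      · intro he
        refine key x hxN ⟨fun he2 => hx ?_, hx⟩
        exact he2.symm.trans he
  have hdisj : Disjoint (D0a \ N) (Dab \ N) := by
    rw [Set.disjoint_left]
    rintro x ⟨hx1, hxN⟩ ⟨hx2, _⟩
    exact key x hxN ⟨hx1, hx2⟩
  calc μ D0b = μ (D0b \ N) := (measure_diff_null hNnull).symm
    _ = μ ((D0a \ N) ∪ (Dab \ N)) := by rw [hsplit]
    _ = μ (D0a \ N) + μ (Dab \ N) :=
        measure_union hdisj ((measurableSet_Dset _ _).diff hNmeas)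
    _ = μ D0a + μ Dab := by rw [measure_diff_null hNnull, measure_diff_null hNnull]

lemma G_val {d : ℕ} {μ : Measure (EuclideanSpace ℝ (Fin d))} (hμ : IsUniformOnSphere μ)
    (hd : 2 ≤ d) {θ : ℝ} (h0 : 0 ≤ θ) (hπ : θ ≤ Real.pi) :
    μ (Dset (uvec d hd 0) (uvec d hd θ)) = ENNReal.ofReal (θ / Real.pi) := by
  haveI := hμ.1
  have hπpos := Real.pi_pos
  set g : ℝ → ℝ := fun t => (μ (Dset (uvec d hd 0) (uvec d hd t))).toReal with hg
  have hne : ∀ t : ℝ, μ (Dset (uvec d hd 0) (uvec d hd t)) ≠ ⊤ := fun t => measure_ne_top μ _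
  have hgadd : ∀ {a b : ℝ}, 0 ≤ a → a ≤ b → b ≤ Real.pi → g b = g a + g (b - a) := by
    intro a b h1 h2 h3
    simp only [hg]
    rw [G_additive hμ hd h1 h2 h3, ENNReal.toReal_add (hne _) (hne _)]
  have hg0 : g 0 = 0 := by
    have hE : Dset (uvec d hd 0) (uvec d hd 0) = ∅ := by ext x; simp [Dset]
    simp [hg, hE]
  have hgpi : g Real.pi = 1 := by
    have h1 := meas_Dset_neg hμ hd (uvec d hd 0) (norm_uvec hd 0)
    simp [hg, uvec_pi hd, h1]
  have hgnn : ∀ t, 0 ≤ g t := fun t => ENNReal.toReal_nonneg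
  have hmono : ∀ {a b : ℝ}, 0 ≤ a → a ≤ b → b ≤ Real.pi → g a ≤ g b := by
    intro a b h1 h2 h3
    rw [hgadd h1 h2 h3]
    linarith [hgnn (b - a)]
  have hdiv : ∀ n : ℕ, 1 ≤ n → ∀ k : ℕ, k ≤ n → g (k * (Real.pi / n)) = k * g (Real.pi / n) := by
    intro n hn
    have hnpos : (0:ℝ) < n := by positivity
    intro k
    induction k with
    | zero => intro _; simpa using hg0
    | succ m ih =>
      intro hm
      have hm' : m ≤ n := by omega
      have hπn : 0 < Real.pi / n := by positivity
      have hble : ((m+1 : ℕ):ℝ) * (Real.pi / n) ≤ Real.pi := by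
        have h1 : ((m+1 : ℕ):ℝ) ≤ n := by exact_mod_cast hm
        calc ((m+1 : ℕ):ℝ) * (Real.pi / n) ≤ n * (Real.pi / n) :=
              mul_le_mul_of_nonneg_right h1 hπn.le
          _ = Real.pi := by field_simp
      have hab : (m:ℝ) * (Real.pi / n) ≤ ((m+1 : ℕ):ℝ) * (Real.pi / n) := by
        apply mul_le_mul_of_nonneg_right _ hπn.le
        push_cast; linarith
      have hstep := hgadd (show (0:ℝ) ≤ m * (Real.pi / n) by positivity) hab hble
      have hdiffeq : ((m+1 : ℕ):ℝ) * (Real.pi / n) - (m:ℝ) * (Real.pi / n) = Real.pi / n := by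
        push_cast; ring
      rw [hdiffeq] at hstep
      rw [hstep, ih hm']
      push_cast; ring
  have hunit : ∀ n : ℕ, 1 ≤ n → g (Real.pi / n) = 1 / n := by
    intro n hn
    have hnpos : (0:ℝ) < n := by positivity
    have h1 := hdiv n hn n le_rfl
    have h2 : (n:ℝ) * (Real.pi / n) = Real.pi := by field_simp
    rw [h2, hgpi] at h1
    field_simp
    linarith
  rcases eq_or_lt_of_le hπ with hθπ | hθπ
  · rw [hθπ, uvec_pi hd, meas_Dset_neg hμ hd _ (norm_uvec hd 0),
      div_self Real.pi_ne_zero]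
    simp
  · have hkey : g θ = θ / Real.pi := by
      have hb : ∀ n : ℕ, 1 ≤ n → |g θ - θ / Real.pi| ≤ 1 / n := by
        intro n hn
        have hnpos : (0:ℝ) < n := by positivity
        set k := Nat.floor ((n:ℝ) * θ / Real.pi) with hk
        have hargnn : 0 ≤ (n:ℝ) * θ / Real.pi := by positivity
        have hk1 : (k:ℝ) ≤ (n:ℝ) * θ / Real.pi := Nat.floor_le hargnn
        have hk2 : (n:ℝ) * θ / Real.pi < k + 1 := Nat.lt_floor_add_one _
        have hk1' : (k:ℝ) * Real.pi ≤ n * θ := (le_div_iff₀ hπpos).mp hk1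
        have hk2' : (n:ℝ) * θ < ((k:ℝ) + 1) * Real.pi := (div_lt_iff₀ hπpos).mp hk2
        have hkn : k + 1 ≤ n := by
          have hlt : (n:ℝ) * θ / Real.pi < n := by
            rw [div_lt_iff₀ hπpos]
            nlinarith
          have hkr : (k:ℝ) < n := lt_of_le_of_lt hk1 hlt
          have : k < n := by exact_mod_cast hkr
          omega
        have hkn' : ((k:ℝ) + 1) ≤ n := by
          have : ((k+1 : ℕ):ℝ) ≤ n := by exact_mod_cast hkn
          push_cast at this; linarith
        have hle1 : (k:ℝ) * (Real.pi / n) ≤ θ := by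
          rw [mul_div_assoc'] at *
          rw [div_le_iff₀ hnpos]
          nlinarith
        have hle2 : θ ≤ ((k:ℝ) + 1) * (Real.pi / n) := by
          rw [mul_div_assoc']
          rw [le_div_iff₀ hnpos]
          nlinarith
        have hub : ((k:ℝ) + 1) * (Real.pi / n) ≤ Real.pi := by
          have hπn : (0:ℝ) < Real.pi / n := by positivity
          calc ((k:ℝ) + 1) * (Real.pi / n) ≤ n * (Real.pi / n) :=
                mul_le_mul_of_nonneg_right hkn' hπn.le
            _ = Real.pi := by field_simp
        have hglb := hmono (show (0:ℝ) ≤ k * (Real.pi / n) by positivity) hle1 hθπ.le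
        have hgub := hmono h0 hle2 hub
        have hvk : g ((k:ℝ) * (Real.pi / n)) = k * (1 / (n:ℝ)) := by
          rw [hdiv n hn k (by omega), hunit n hn]
        have hvk1 : g (((k:ℝ) + 1) * (Real.pi / n)) = ((k:ℝ) + 1) * (1 / (n:ℝ)) := by
          have := hdiv n hn (k+1) hkn
          rw [hunit n hn] at this
          push_cast at this
          convert this using 2 <;> push_cast <;> ring
        rw [hvk] at hglb
        rw [hvk1] at hgub
        have hθπ1 : (k:ℝ) / n ≤ θ / Real.pi := by
          rw [div_le_div_iff₀ hnpos hπpos]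
          linarith
        have hθπ2 : θ / Real.pi ≤ ((k:ℝ) + 1) / n := by
          rw [div_le_div_iff₀ hπpos hnpos]
          linarith
        rw [abs_le]
        constructor
        · have : (k:ℝ) * (1 / n) = k / n := by ring
          rw [this] at hglb
          have h1n : ((k:ℝ)+1)/n - (k:ℝ)/n = 1/n := by field_simp; ring
          nlinarith
        · have : ((k:ℝ) + 1) * (1 / n) = ((k:ℝ)+1) / n := by ring
          rw [this] at hgub
          have h1n : ((k:ℝ)+1)/n - (k:ℝ)/n = 1/n := by field_simp; ring
          nlinarith
      by_contra hne'
      have hpos : 0 < |g θ - θ / Real.pi| := abs_pos.mpr (sub_ne_zero.mpr hne')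
      obtain ⟨n, hn⟩ := exists_nat_one_div_lt hpos
      have := hb (n+1) (by omega)
      push_cast at this hn
      linarith
    have hofr : μ (Dset (uvec d hd 0) (uvec d hd θ)) = ENNReal.ofReal (g θ) :=
      (ENNReal.ofReal_toReal (hne θ)).symm
    rw [hofr, hkey]

theorem stmt_7 {d : ℕ} (hd : 2 ≤ d) (μ : Measure (EuclideanSpace ℝ (Fin d)))
    (hμ : IsUniformOnSphere μ)
    (v₁ v₂ : EuclideanSpace ℝ (Fin d)) (hv₁ : ‖v₁‖ = 1) (hv₂ : ‖v₂‖ = 1) :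
    μ {x | rsign ⟪v₁, x⟫ ≠ rsign ⟪v₂, x⟫} =
      ENNReal.ofReal (Real.arccos ⟪v₁, v₂⟫ / Real.pi) := by
  set θ := Real.arccos ⟪v₁, v₂⟫ with hθ
  have hbd : |⟪v₁, v₂⟫| ≤ 1 := by
    have := abs_real_inner_le_norm v₁ v₂
    rwa [hv₁, hv₂, one_mul] at this
  have habs := abs_le.mp hbd
  have hcos : Real.cos θ = ⟪v₁, v₂⟫ := Real.cos_arccos habs.1 habs.2
  have h1 : μ {x | rsign ⟪v₁, x⟫ ≠ rsign ⟪v₂, x⟫} = μ (Dset v₁ v₂) := rfl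
  have h2 : μ (Dset v₁ v₂) = μ (Dset (uvec d hd 0) (uvec d hd θ)) := by
    apply meas_Dset_eq hμ hd hv₁ hv₂ (norm_uvec hd 0) (norm_uvec hd θ)
    rw [inner_uvec, sub_zero, hcos]
  rw [h1, h2, G_val hμ hd (Real.arccos_nonneg _) (Real.arccos_le_pi _)]
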